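/- arXiv:2103.05962 — 3 statements merged into one kernel-verified Lean document; each statement's English description precedes it below -/
import Mathlib

section
/- Let N be a positive integer and let X, Y be Hermitian N×N complex matrices. For t ∈ ℝ, let F_X(t) = (1/N)·#{eigenvalues λ of X (with multiplicity) with λ ≤ t} denote the empirical cumulative distribution function. Then sup_{t ∈ ℝ} |F_X(t) − F_{X+Y}(t)| ≤ rank(Y)/N. -/
open Matrix Finset

/-- Empirical cumulative distribution function of a Hermitian matrix. -/
noncomputable def ecdf {N : ℕ} {X : Matrix (Fin N) (Fin N) ℂ}
    (hX : X.IsHermitian) (t : ℝ) : ℝ :=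
  (Finset.univ.filter (fun i => hX.eigenvalues i ≤ t)).card / N

lemma eigT {N : ℕ} {A : Matrix (Fin N) (Fin N) ℂ} (hA : A.IsHermitian) (j : Fin N) :
    toEuclideanLin A (hA.eigenvectorBasis j) = (hA.eigenvalues j : ℂ) • hA.eigenvectorBasis j := by
  have h := hA.mulVec_eigenvectorBasis j
  ext i
  have := congrFun h i
  simpa [toEuclideanLin_apply, Complex.real_smul] using this

lemma rayleigh_eq {N : ℕ} {A : Matrix (Fin N) (Fin N) ℂ} (hA : A.IsHermitian)
    (v : EuclideanSpace ℂ (Fin N)) :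
    (inner ℂ v (toEuclideanLin A v) : ℂ).re
      = ∑ i, hA.eigenvalues i * Complex.normSq (inner ℂ (hA.eigenvectorBasis i) v : ℂ) := by
  set e := hA.eigenvectorBasis
  set c : Fin N → ℂ := fun i => inner ℂ (e i) v
  have hv : v = ∑ i, c i • e i := (e.sum_repr' v).symm
  have hTv : toEuclideanLin A v = ∑ i, ((hA.eigenvalues i : ℂ) * c i) • e i := by
    conv_lhs => rw [hv]
    rw [map_sum]
    refine Finset.sum_congr rfl fun i _ => ?_
    rw [_root_.map_smul, eigT hA i, smul_smul, mul_comm]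
  have := e.orthonormal.inner_sum c (fun i => (hA.eigenvalues i : ℂ) * c i) univ
  rw [hTv]
  conv_lhs => rw [hv]
  rw [this]
  rw [Complex.re_sum]
  refine Finset.sum_congr rfl fun i _ => ?_
  have : (starRingEnd ℂ) (c i) * ((hA.eigenvalues i : ℂ) * c i)
      = (hA.eigenvalues i : ℂ) * ((starRingEnd ℂ) (c i) * c i) := by ring
  rw [this]
  rw [← Complex.normSq_eq_conj_mul_self, ← Complex.ofReal_mul, Complex.ofReal_re]

lemma norm_eq {N : ℕ} {A : Matrix (Fin N) (Fin N) ℂ} (hA : A.IsHermitian)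
    (v : EuclideanSpace ℂ (Fin N)) :
    (inner ℂ v v : ℂ).re = ∑ i, Complex.normSq (inner ℂ (hA.eigenvectorBasis i) v : ℂ) := by
  set e := hA.eigenvectorBasis
  set c : Fin N → ℂ := fun i => inner ℂ (e i) v
  have hv : v = ∑ i, c i • e i := (e.sum_repr' v).symm
  have := e.orthonormal.inner_sum c c univ
  conv_lhs => rw [hv]
  rw [this, Complex.re_sum]
  refine Finset.sum_congr rfl fun i _ => ?_
  rw [← Complex.normSq_eq_conj_mul_self, Complex.ofReal_re]

lemma key {N : ℕ} (A B C : Matrix (Fin N) (Fin N) ℂ) (hA : A.IsHermitian)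
    (hC : C.IsHermitian) (hCeq : C = A + B) (t : ℝ) :
    (Finset.univ.filter (fun i => hA.eigenvalues i ≤ t)).card
      ≤ (Finset.univ.filter (fun i => hC.eigenvalues i ≤ t)).card + B.rank := by
  by_contra hcon
  push_neg at hcon
  set sA := Finset.univ.filter (fun i => hA.eigenvalues i ≤ t) with hsA
  set sC := Finset.univ.filter (fun i => hC.eigenvalues i ≤ t) with hsC
  set e := hA.eigenvectorBasis
  set f := hC.eigenvectorBasis
  set V : Submodule ℂ (EuclideanSpace ℂ (Fin N)) :=
    Submodule.span ℂ (Set.range fun i : ↥sA => e i) with hVdef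
  set U : Submodule ℂ (EuclideanSpace ℂ (Fin N)) :=
    Submodule.span ℂ (Set.range fun i : ↥sCᶜ => f i) with hUdef
  set K : Submodule ℂ (EuclideanSpace ℂ (Fin N)) :=
    LinearMap.ker (toEuclideanLin B) with hKdef
  -- dimensions
  have hfinE : Module.finrank ℂ (EuclideanSpace ℂ (Fin N)) = N := by
    simp [finrank_euclideanSpace]
  have liA : LinearIndependent ℂ (fun i : ↥sA => e i) :=
    e.orthonormal.linearIndependent.comp _ Subtype.val_injective
  have liC : LinearIndependent ℂ (fun i : ↥sCᶜ => f i) :=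
    f.orthonormal.linearIndependent.comp _ Subtype.val_injective
  have hV : Module.finrank ℂ V = sA.card := by
    rw [hVdef, finrank_span_eq_card liA, Fintype.card_coe]
  have hU : Module.finrank ℂ U = sCᶜ.card := by
    rw [hUdef, finrank_span_eq_card liC, Fintype.card_coe]
  have hUcard : sCᶜ.card = N - sC.card := by
    rw [Finset.card_compl, Fintype.card_fin]
  have hsCle : sC.card ≤ N := by
    simpa using (Finset.card_le_univ sC).trans_eq (by simp)
  -- rank-nullity for K
  have hrange : Module.finrank ℂ (LinearMap.range (toEuclideanLin B)) = B.rank := by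
    have hrepr : (toEuclideanLin B : EuclideanSpace ℂ (Fin N) →ₗ[ℂ] EuclideanSpace ℂ (Fin N))
        = (WithLp.linearEquiv 2 ℂ (Fin N → ℂ)).symm.toLinearMap ∘ₗ
            (B.mulVecLin ∘ₗ (WithLp.linearEquiv 2 ℂ (Fin N → ℂ)).toLinearMap) := rfl
    rw [hrepr, LinearMap.range_comp, LinearMap.range_comp, LinearEquiv.range,
      Submodule.map_top, LinearEquiv.finrank_map_eq]
    rfl
  have hrn := LinearMap.finrank_range_add_finrank_ker (toEuclideanLin B)
  rw [hfinE, hrange] at hrn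
  have hKr : B.rank + Module.finrank ℂ ↥K = N := by rw [hKdef]; exact hrn
  clear hrn hrange
  -- rank bound
  have hrkB : B.rank ≤ N := by
    have := Matrix.rank_le_card_width B
    simpa using this
  -- dimension counting
  have d1 := Submodule.finrank_sup_add_finrank_inf_eq V U
  have d2 := Submodule.finrank_sup_add_finrank_inf_eq (V ⊓ U) K
  have l1 : Module.finrank ℂ ↥(V ⊔ U) ≤ N :=
    le_trans (Submodule.finrank_le _) (le_of_eq hfinE)
  have l2 : Module.finrank ℂ ↥((V ⊓ U) ⊔ K) ≤ N :=
    le_trans (Submodule.finrank_le _) (le_of_eq hfinE)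
  have hpos : 0 < Module.finrank ℂ ↥(V ⊓ U ⊓ K) := by omega
  have hne : V ⊓ U ⊓ K ≠ ⊥ := by
    intro h
    rw [h, finrank_bot] at hpos
    exact lt_irrefl _ hpos
  obtain ⟨v, hvW, hv0⟩ := (V ⊓ U ⊓ K).ne_bot_iff.mp hne
  obtain ⟨⟨hvV, hvU⟩, hvK⟩ := hvW
  -- coordinates vanish outside the spanning sets
  have cA : ∀ j ∉ sA, (inner ℂ (e j) v : ℂ) = 0 := by
    intro j hj
    have hle : V ≤ LinearMap.ker ((innerSL ℂ (e j) : EuclideanSpace ℂ (Fin N) →ₗ[ℂ] ℂ)) := by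
      rw [hVdef, Submodule.span_le]
      rintro _ ⟨i, rfl⟩
      have hij : (i : Fin N) ≠ j := fun h => hj (h ▸ i.2)
      simpa [LinearMap.mem_ker] using e.orthonormal.2 (Ne.symm hij)
    simpa [LinearMap.mem_ker] using hle hvV
  have cC : ∀ j ∈ sC, (inner ℂ (f j) v : ℂ) = 0 := by
    intro j hj
    have hle : U ≤ LinearMap.ker ((innerSL ℂ (f j) : EuclideanSpace ℂ (Fin N) →ₗ[ℂ] ℂ)) := by
      rw [hUdef, Submodule.span_le]
      rintro _ ⟨i, rfl⟩
      have hij : (i : Fin N) ≠ j := by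
        intro h
        exact (Finset.mem_compl.mp i.2) (h ▸ hj)
      simpa [LinearMap.mem_ker] using f.orthonormal.2 (Ne.symm hij)
    simpa [LinearMap.mem_ker] using hle hvU
  -- Rayleigh quotient estimates
  have hle : (inner ℂ v (toEuclideanLin A v) : ℂ).re ≤ t * (inner ℂ v v : ℂ).re := by
    rw [rayleigh_eq hA, norm_eq hA, Finset.mul_sum]
    refine Finset.sum_le_sum fun i _ => ?_
    by_cases hi : i ∈ sA
    · have hti : hA.eigenvalues i ≤ t := (Finset.mem_filter.mp hi).2
      exact mul_le_mul_of_nonneg_right hti (Complex.normSq_nonneg _)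
    · rw [cA i hi]
      simp
  have hgt : t * (inner ℂ v v : ℂ).re < (inner ℂ v (toEuclideanLin C v) : ℂ).re := by
    rw [rayleigh_eq hC, norm_eq hC, Finset.mul_sum]
    have hex : ∃ i, (inner ℂ (f i) v : ℂ) ≠ 0 := by
      by_contra hall
      push_neg at hall
      apply hv0
      rw [← f.sum_repr' v]
      simp [hall]
    obtain ⟨i₀, hi₀⟩ := hex
    have hi₀s : i₀ ∉ sC := fun h => hi₀ (cC i₀ h)
    have hti₀ : t < hC.eigenvalues i₀ := by
      by_contra h
      exact hi₀s (Finset.mem_filter.mpr ⟨Finset.mem_univ _, not_lt.mp h⟩)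
    refine Finset.sum_lt_sum (fun i _ => ?_) ⟨i₀, Finset.mem_univ _, ?_⟩
    · by_cases hi : i ∈ sC
      · rw [cC i hi]; simp
      · have hti : t ≤ hC.eigenvalues i := by
          by_contra h
          exact hi (Finset.mem_filter.mpr ⟨Finset.mem_univ _, le_of_lt (not_le.mp h)⟩)
        exact mul_le_mul_of_nonneg_right hti (Complex.normSq_nonneg _)
    · exact mul_lt_mul_of_pos_right hti₀ (Complex.normSq_pos.mpr hi₀)
  -- but C and A act the same on v
  have hBv : toEuclideanLin B v = 0 := hvK
  have hTC : toEuclideanLin C v = toEuclideanLin A v := by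
    rw [hCeq, map_add, LinearMap.add_apply, hBv, add_zero]
  rw [hTC] at hgt
  linarith

lemma rank_neg {N : ℕ} (Y : Matrix (Fin N) (Fin N) ℂ) : (-Y).rank = Y.rank := by
  have h : (-Y).mulVecLin = -Y.mulVecLin := by
    ext x
    simp [Matrix.neg_mulVec]
  unfold Matrix.rank
  rw [h, LinearMap.range_neg]

theorem rank_inequality_cdf (N : ℕ) (hN : 0 < N)
    (X Y : Matrix (Fin N) (Fin N) ℂ) (hX : X.IsHermitian) (hY : Y.IsHermitian)
    (hXY : (X + Y).IsHermitian) :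
    ∀ t : ℝ, |ecdf hX t - ecdf hXY t| ≤ (Y.rank : ℝ) / N := by
  intro t
  have k1 := key X Y (X + Y) hX hXY rfl t
  have k2 := key (X + Y) (-Y) X hXY hX (by abel) t
  rw [rank_neg] at k2
  have hNpos : (0 : ℝ) < N := by exact_mod_cast hN
  unfold ecdf
  rw [div_sub_div_same, abs_div, abs_of_pos hNpos]
  gcongr
  rw [abs_sub_le_iff]
  have k1' : ((Finset.univ.filter (fun i => hX.eigenvalues i ≤ t)).card : ℝ)
      ≤ (Finset.univ.filter (fun i => hXY.eigenvalues i ≤ t)).card + Y.rank := by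
    exact_mod_cast k1
  have k2' : ((Finset.univ.filter (fun i => hXY.eigenvalues i ≤ t)).card : ℝ)
      ≤ (Finset.univ.filter (fun i => hX.eigenvalues i ≤ t)).card + Y.rank := by
    exact_mod_cast k2
  constructor <;> linarith
end

section
/- Let A be a unital ring. Suppose R₁ = u₁ A₁⁻¹ v₁ and R₂ = u₂ A₂⁻¹ v₂ where A₁ ∈ M_{k₁}(A) and A₂ ∈ M_{k₂}(A) are invertible, u₁ ∈ M_{p×k₁}(A), v₁ ∈ M_{k₁×q}(A), u₂ ∈ M_{q×k₂}(A), v₂ ∈ M_{k₂×r}(A). Then the block matrix B = [[A₁, −v₁u₂],[0, A₂]] ∈ M_{k₁+k₂}(A) is invertible and R₁ · R₂ = [u₁ 0] · B⁻¹ · [0 ; v₂]. -/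
open Matrix

theorem product_linearization (R : Type*) [Ring R] (p q r k₁ k₂ : ℕ)
    (A₁ : Matrix (Fin k₁) (Fin k₁) R) [Invertible A₁]
    (A₂ : Matrix (Fin k₂) (Fin k₂) R) [Invertible A₂]
    (u₁ : Matrix (Fin p) (Fin k₁) R) (v₁ : Matrix (Fin k₁) (Fin q) R)
    (u₂ : Matrix (Fin q) (Fin k₂) R) (v₂ : Matrix (Fin k₂) (Fin r) R) :
    ∃ C : Matrix (Fin k₁ ⊕ Fin k₂) (Fin k₁ ⊕ Fin k₂) R,
      Matrix.fromBlocks A₁ (-(v₁ * u₂)) 0 A₂ * C = 1 ∧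
      C * Matrix.fromBlocks A₁ (-(v₁ * u₂)) 0 A₂ = 1 ∧
      (u₁ * ⅟A₁ * v₁) * (u₂ * ⅟A₂ * v₂) =
        Matrix.fromCols u₁ (0 : Matrix (Fin p) (Fin k₂) R) * C *
          Matrix.fromRows (0 : Matrix (Fin k₁) (Fin r) R) v₂ := by
  refine ⟨Matrix.fromBlocks (⅟A₁) (⅟A₁ * (v₁ * u₂) * ⅟A₂) 0 (⅟A₂), ?_, ?_, ?_⟩
  · rw [Matrix.fromBlocks_multiply, ← Matrix.fromBlocks_one]
    simp only [Matrix.mul_zero, Matrix.zero_mul, Matrix.neg_mul, Matrix.mul_assoc,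
      Matrix.mul_invOf_cancel_left, mul_invOf_self, add_zero, zero_add, add_neg_cancel]
  · rw [Matrix.fromBlocks_multiply, ← Matrix.fromBlocks_one]
    simp only [Matrix.mul_zero, Matrix.zero_mul, Matrix.mul_neg, Matrix.invOf_mul_cancel_right,
      invOf_mul_self, add_zero, zero_add, neg_add_cancel, neg_zero]
  · rw [Matrix.fromCols_mul_fromBlocks, Matrix.fromCols_mul_fromRows]
    simp only [Matrix.zero_mul, Matrix.mul_zero, add_zero, zero_add, Matrix.mul_assoc]
end

section
/- Let A be a unital complex *-algebra, let A ∈ M_k(A) be invertible, u ∈ M_{1×k}(A), v ∈ M_{k×1}(A), and set r = u A⁻¹ v ∈ A. Define the block matrix Q = [[0, A*],[A, 0]] ∈ M_{2k}(A) and w = [½ u* ; v] ∈ M_{2k×1}(A). Then Q is invertible, Q⁻¹ = [[0, A⁻¹],[(A*)⁻¹, 0]], and w* Q⁻¹ w = ½(r + r*). In particular, if r is self-adjoint then r = w* Q⁻¹ w. -/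
open Matrix

theorem selfadjoint_linearization (A : Type*) [Ring A] [Algebra ℂ A]
    [StarRing A] [StarModule ℂ A] (k : ℕ)
    (M : Matrix (Fin k) (Fin k) A) [Invertible M]
    (u : Matrix (Fin 1) (Fin k) A) (v : Matrix (Fin k) (Fin 1) A) :
    let r : Matrix (Fin 1) (Fin 1) A := u * ⅟M * v
    let Q : Matrix (Fin k ⊕ Fin k) (Fin k ⊕ Fin k) A := Matrix.fromBlocks 0 Mᴴ M 0
    let Qi : Matrix (Fin k ⊕ Fin k) (Fin k ⊕ Fin k) A := Matrix.fromBlocks 0 (⅟M) (⅟M)ᴴ 0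
    let w : Matrix (Fin k ⊕ Fin k) (Fin 1) A :=
      Matrix.fromRows ((2 : ℂ)⁻¹ • uᴴ) v
    Q * Qi = 1 ∧ Qi * Q = 1 ∧
    wᴴ * Qi * w = (2 : ℂ)⁻¹ • (r + rᴴ) ∧
    (rᴴ = r → r = wᴴ * Qi * w) := by
  intro r Q Qi w
  have hMi : Mᴴ * (⅟M)ᴴ = 1 := by
    rw [← conjTranspose_mul, invOf_mul_self, conjTranspose_one]
  have hMi' : (⅟M)ᴴ * Mᴴ = 1 := by
    rw [← conjTranspose_mul, mul_invOf_self, conjTranspose_one]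
  have h1 : Q * Qi = 1 := by
    simp [Q, Qi, fromBlocks_multiply, hMi, ← fromBlocks_one]
  have h2 : Qi * Q = 1 := by
    simp [Q, Qi, fromBlocks_multiply, hMi', ← fromBlocks_one]
  have hw : wᴴ * Qi * w = (2 : ℂ)⁻¹ • (r + rᴴ) := by
    have hwH : wᴴ = fromCols ((2 : ℂ)⁻¹ • u) vᴴ := by
      rw [show w = fromRows ((2 : ℂ)⁻¹ • uᴴ) v from rfl,
        conjTranspose_fromRows_eq_fromCols_conjTranspose]
      congr 1
      rw [conjTranspose_smul, conjTranspose_conjTranspose]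
      norm_num
    rw [Matrix.mul_assoc, hwH, show Qi * w = fromRows (⅟M * v) ((⅟M)ᴴ * ((2 : ℂ)⁻¹ • uᴴ)) by
      rw [show Qi = fromBlocks 0 (⅟M) (⅟M)ᴴ 0 from rfl,
        show w = fromRows ((2 : ℂ)⁻¹ • uᴴ) v from rfl, fromBlocks_mul_fromRows]
      rw [Matrix.zero_mul, Matrix.zero_mul, zero_add, add_zero],
      fromCols_mul_fromRows]
    have hr : rᴴ = vᴴ * ((⅟M)ᴴ * uᴴ) := by
      rw [show r = u * ⅟M * v from rfl, conjTranspose_mul, conjTranspose_mul]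
    rw [smul_add]
    congr 1
    · rw [Matrix.smul_mul, show r = u * ⅟M * v from rfl, Matrix.mul_assoc]
    · rw [hr, Matrix.mul_smul, Matrix.mul_smul]
  exact ⟨h1, h2, hw, fun hsa => by rw [hw, hsa, ← two_smul ℂ r, smul_smul]; norm_num⟩
end
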